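/- Let {S_k : k ∈ ℕ} be subsets of (0,∞), each with the Baire property and essentially unbounded in the category sense (S_k ∩ (m,∞) non-meagre for all m). Then for quasi all η > 0 (all η off a meagre set) and each k there exists an infinite set J ⊆ ℕ with nη ∈ S_k for all n ∈ J. In particular this holds if every S_k is open and unbounded. -/

import Mathlib

open Filter Set Topology

/-- Preimage of a meagre set under multiplication by a nonzero constant is meagre. -/
lemma aux_mul_preimage_meagre {c : ℝ} (hc : c ≠ 0) {s : Set ℝ} (h : IsMeagre s) :
    IsMeagre ((fun x => c * x) ⁻¹' s) := by
  have hcoe : ⇑(Homeomorph.mulLeft₀ c hc) = (fun x => c * x) := rfl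
  have := h.preimage_of_isOpenMap (f := fun x => c * x)
    (by fun_prop) (hcoe ▸ (Homeomorph.mulLeft₀ c hc).isOpenMap)
  exact this

lemma aux_mul_preimage_baire {c : ℝ} (hc : c ≠ 0) {s : Set ℝ} (h : BaireMeasurableSet s) :
    BaireMeasurableSet ((fun x => c * x) ⁻¹' s) := by
  have hcoe : ⇑(Homeomorph.mulLeft₀ c hc) = (fun x => c * x) := rfl
  exact h.preimage (by fun_prop) (hcoe ▸ (Homeomorph.mulLeft₀ c hc).isOpenMap)

/-- Key lemma: the set of positive η such that no multiple nη (n ≥ N) lands in S is meagre. -/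
lemma aux_key (S : Set ℝ) (hS0 : S ⊆ Ioi 0) (hS : BaireMeasurableSet S)
    (hUnb : ∀ m : ℕ, ¬ IsMeagre (S ∩ Ioi (m : ℝ))) (N : ℕ) :
    IsMeagre (Ioi 0 \ ⋃ n, ⋃ (_ : N ≤ n), (fun x => (n : ℝ) * x) ⁻¹' S) := by
  set A : ℕ → Set ℝ := fun n => (fun x => (n : ℝ) * x) ⁻¹' S with hA_def
  set B : Set ℝ := Ioi 0 \ ⋃ n, ⋃ (_ : N ≤ n), A n with hB_def
  by_contra hB
  -- B is Baire measurable
  have hA : ∀ n, BaireMeasurableSet (A n) := by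
    intro n
    rcases Nat.eq_zero_or_pos n with h0 | h1
    · subst h0
      have : A 0 = ∅ := by
        ext x
        simp only [hA_def, mem_preimage, Nat.cast_zero, zero_mul, mem_empty_iff_false,
          iff_false]
        intro hx
        exact absurd (hS0 hx) (by simp)
      rw [this]
      exact isOpen_empty.baireMeasurableSet
    · exact aux_mul_preimage_baire (by positivity) hS
  have hBmeas : BaireMeasurableSet B :=
    isOpen_Ioi.baireMeasurableSet.diff
      (BaireMeasurableSet.iUnion fun n => BaireMeasurableSet.iUnion fun _ => hA n)
  obtain ⟨U, hUopen, hBU⟩ := hBmeas.residualEq_isOpen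
  have hBU' : ∀ᶠ x in residual ℝ, x ∈ B ↔ x ∈ U := eventuallyEq_set.mp hBU
  have hUB : IsMeagre (U \ B) := by
    rw [IsMeagre]
    filter_upwards [hBU'] with x hx
    simp only [mem_compl_iff, mem_diff, not_and, not_not]
    tauto
  have hBUm : IsMeagre (B \ U) := by
    rw [IsMeagre]
    filter_upwards [hBU'] with x hx
    simp only [mem_compl_iff, mem_diff, not_and, not_not]
    tauto
  -- U ∩ Ioi 0 must be nonempty, else B would be meagre
  have hUpos : (U ∩ Ioi 0).Nonempty := by
    by_contra hne
    rw [Set.not_nonempty_iff_eq_empty] at hne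
    apply hB
    refine hBUm.mono ?_
    intro y hy
    refine ⟨hy, fun hyU => ?_⟩
    have : y ∈ U ∩ Ioi 0 := ⟨hyU, hy.1⟩
    rw [hne] at this
    exact this
  obtain ⟨x, hxU, hx0⟩ := hUpos
  obtain ⟨ε, hε, hball⟩ := Metric.isOpen_iff.mp (hUopen.inter isOpen_Ioi) x ⟨hxU, hx0⟩
  set δ : ℝ := min (ε / 2) (x / 2) with hδ_def
  have hδpos : 0 < δ := by
    simp only [hδ_def, lt_min_iff]
    constructor <;> linarith [mem_Ioi.mp hx0]
  set a : ℝ := x - δ with ha_def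
  set b : ℝ := x + δ with hb_def
  have hapos : 0 < a := by
    have : δ ≤ x / 2 := min_le_right _ _
    have hx : 0 < x := hx0
    simp only [ha_def]; linarith
  have hab : a < b := by simp only [ha_def, hb_def]; linarith
  have hbpos : 0 < b := lt_trans hapos hab
  have hIoo : Ioo a b ⊆ U ∩ Ioi 0 := by
    intro y hy
    apply hball
    rw [Metric.mem_ball, Real.dist_eq, abs_lt]
    have : δ ≤ ε / 2 := min_le_left _ _
    obtain ⟨h1, h2⟩ := hy
    simp only [ha_def] at h1
    simp only [hb_def] at h2
    constructor <;> linarith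
  -- each S ∩ Ioo (n*a) (n*b) for n ≥ N is meagre
  have hmeag : ∀ n : ℕ, N ≤ n → IsMeagre (S ∩ Ioo ((n : ℝ) * a) ((n : ℝ) * b)) := by
    intro n hn
    rcases Nat.eq_zero_or_pos n with h0 | h1
    · subst h0
      simp only [Nat.cast_zero, zero_mul]
      rw [Ioo_self, inter_empty]
      exact IsMeagre.empty
    have hnpos : (0 : ℝ) < n := by positivity
    have h1meag : IsMeagre (A n ∩ Ioo a b) := by
      refine hUB.mono ?_
      rintro y ⟨hyA, hyab⟩
      refine ⟨(hIoo hyab).1, fun hyB => ?_⟩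
      exact hyB.2 (mem_iUnion.mpr ⟨n, mem_iUnion.mpr ⟨hn, hyA⟩⟩)
    have heq : S ∩ Ioo ((n : ℝ) * a) ((n : ℝ) * b)
        = (fun y => ((n : ℝ))⁻¹ * y) ⁻¹' (A n ∩ Ioo a b) := by
      ext y
      simp only [mem_inter_iff, mem_Ioo, mem_preimage, hA_def]
      have hcancel : (n : ℝ) * ((n : ℝ)⁻¹ * y) = y := by
        field_simp
      rw [hcancel]
      constructor
      · rintro ⟨hyS, h1', h2'⟩
        refine ⟨hyS, ?_, ?_⟩
        · rw [lt_inv_mul_iff₀ hnpos]; linarith [h1']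
        · rw [inv_mul_lt_iff₀ hnpos]; linarith [h2']
      · rintro ⟨hyS, h1', h2'⟩
        rw [lt_inv_mul_iff₀ hnpos] at h1'
        rw [inv_mul_lt_iff₀ hnpos] at h2'
        exact ⟨hyS, by linarith, by linarith⟩
    rw [heq]
    exact aux_mul_preimage_meagre (inv_ne_zero (ne_of_gt hnpos)) h1meag
  -- coverage: for large y, y lies in some Ioo (n*a) (n*b) with n ≥ N
  obtain ⟨m, hm⟩ := exists_nat_ge (max ((N : ℝ) * b) (a * b / (b - a)))
  refine hUnb m ?_
  have cover : S ∩ Ioi (m : ℝ) ⊆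
      ⋃ n : ℕ, (if N ≤ n then S ∩ Ioo ((n : ℝ) * a) ((n : ℝ) * b) else ∅) := by
    rintro y ⟨hyS, hym⟩
    rw [mem_Ioi] at hym
    have hy1 : (N : ℝ) * b < y := lt_of_le_of_lt (le_trans (le_max_left _ _) hm) hym
    have hy2 : a * b / (b - a) < y := lt_of_le_of_lt (le_trans (le_max_right _ _) hm) hym
    have hy0 : 0 < y := hS0 hyS
    set n : ℕ := ⌊y / b⌋₊ + 1 with hn_def
    have hnub : (n : ℝ) ≤ y / b + 1 := by
      rw [hn_def]
      push_cast
      have := Nat.floor_le (a := y / b) (by positivity)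
      linarith
    have hnlb : y / b < (n : ℝ) := by
      rw [hn_def]
      push_cast
      exact Nat.lt_floor_add_one _
    have hnN : N ≤ n := by
      have h1 : (N : ℝ) < y / b := by
        rw [lt_div_iff₀ hbpos]; linarith
      exact_mod_cast le_of_lt (lt_trans h1 (by exact_mod_cast hnlb) : (N : ℝ) < n)
    have hyb : y < (n : ℝ) * b := by
      rw [div_lt_iff₀ hbpos] at hnlb; linarith
    have hya : (n : ℝ) * a < y := by
      have hba : 0 < b - a := by linarith
      rw [div_lt_iff₀ hba] at hy2
      have key : (y / b + 1) * a < y := by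
        rw [div_add' _ _ _ (ne_of_gt hbpos), div_mul_eq_mul_div, div_lt_iff₀ hbpos]
        nlinarith
      calc (n : ℝ) * a ≤ (y / b + 1) * a := by
            apply mul_le_mul_of_nonneg_right hnub (le_of_lt hapos)
        _ < y := key
    refine mem_iUnion.mpr ⟨n, ?_⟩
    rw [if_pos hnN]
    exact ⟨hyS, hya, hyb⟩
  refine IsMeagre.mono cover (isMeagre_iUnion fun n => ?_)
  split_ifs with h
  · exact hmeag n h
  · exact IsMeagre.empty

theorem stmt_10 (S : ℕ → Set ℝ) (hS₀ : ∀ k, S k ⊆ Ioi 0)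
    (hS : ∀ k, BaireMeasurableSet (S k))
    (hUnb : ∀ k, ∀ m : ℕ, ¬ IsMeagre (S k ∩ Ioi (m : ℝ))) :
    ∃ N : Set ℝ, IsMeagre N ∧ ∀ η : ℝ, 0 < η → η ∉ N → ∀ k : ℕ,
      ∃ J : Set ℕ, J.Infinite ∧ ∀ n ∈ J, (n : ℝ) * η ∈ S k := by
  refine ⟨⋃ k : ℕ, ⋃ M : ℕ, (Ioi 0 \ ⋃ n, ⋃ (_ : M ≤ n), (fun x => (n : ℝ) * x) ⁻¹' S k),
    ?_, ?_⟩
  · exact isMeagre_iUnion fun k => isMeagre_iUnion fun M =>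
      aux_key (S k) (hS₀ k) (hS k) (hUnb k) M
  · intro η hη hηN k
    refine ⟨{n : ℕ | (n : ℝ) * η ∈ S k}, ?_, fun n hn => hn⟩
    have key : ∀ M : ℕ, ∃ n : ℕ, M ≤ n ∧ (n : ℝ) * η ∈ S k := by
      intro M
      have : η ∉ Ioi 0 \ ⋃ n, ⋃ (_ : M ≤ n), (fun x => (n : ℝ) * x) ⁻¹' S k := by
        intro hmem
        exact hηN (mem_iUnion.mpr ⟨k, mem_iUnion.mpr ⟨M, hmem⟩⟩)
      simp only [mem_diff, not_and, not_not] at this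
      have h2 := this hη
      obtain ⟨n, hn⟩ := mem_iUnion.mp h2
      obtain ⟨hMn, hnA⟩ := mem_iUnion.mp hn
      exact ⟨n, hMn, hnA⟩
    intro hfin
    obtain ⟨c, hc⟩ := hfin.bddAbove
    obtain ⟨n, hn1, hn2⟩ := key (c + 1)
    have := hc hn2
    omega
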